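/- Let δ ∈ (0, 1/4) and let M₀ = [[a, b],[c, d]] be a 2×2 real matrix with 1 ≤ a ≤ 1+2δ, 1 ≤ d ≤ 1+2δ, b ≤ 1, c ≤ 1, a + c ≤ 0, b + d ≤ 0. Let G = [[(1-2δ)/(1+2δ), 4δ/(1+2δ)], [0, 1]]. Then the (1,1)-entry of G·M₀ is strictly less than 1. -/

import Mathlib

open Matrix

/-- Competition lemma (forward direction) in the regret lower bound: any
cheap incentive-compatible mechanism matrix `M₀` for instance 0 violates the
truthfulness constraint under instance 1, i.e. the `(1,1)` entry of `G·M₀`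
with `G = B₁B₀⁻¹` is strictly less than 1. -/
theorem stmt14 (δ a b c d : ℝ) (hδ0 : 0 < δ) (hδ1 : δ < 1 / 4)
    (ha1 : 1 ≤ a) (ha2 : a ≤ 1 + 2 * δ)
    (hd1 : 1 ≤ d) (hd2 : d ≤ 1 + 2 * δ)
    (hb : b ≤ 1) (hc : c ≤ 1)
    (hac : a + c ≤ 0) (hbd : b + d ≤ 0) :
    (!![(1 - 2 * δ) / (1 + 2 * δ), 4 * δ / (1 + 2 * δ); 0, 1] *
      !![a, b; c, d]) 0 0 < 1 := by
  have hpos : (0:ℝ) < 1 + 2 * δ := by linarith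
  simp [Matrix.mul_apply, Fin.sum_univ_two]
  rw [div_mul_eq_mul_div, div_mul_eq_mul_div, ← add_div, div_lt_one hpos]
  nlinarith [mul_nonneg (le_of_lt hδ0) (sub_nonneg.2 ha1)]
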